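/- Let f : D → C be a function on a finite set D and k ≥ 1. Then ∑ over tuples (x_1,...,x_k) ∈ D^k with pairwise distinct coordinates of f(x_1)f(x_2)···f(x_k) equals ∑_{∑ i c_i = k} (-1)^{k - ∑ c_i} N(c_1,...,c_k) ∏_{i=1}^k (∑_{x∈D} f(x)^i)^{c_i}, where N(c_1,...,c_k) is the number of permutations in S_k with cycle type (c_1,...,c_k). -/

import Mathlib

open Equiv Finset

/-- The full cycle type of a permutation of `Fin k` (fixed points counted as
1-cycles). -/
def fullCycleType {k : ℕ} (σ : Equiv.Perm (Fin k)) : Multiset ℕ :=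
  σ.cycleType + Multiset.replicate (k - σ.support.card) 1

section Classes

variable {k : ℕ} (σ : Equiv.Perm (Fin k))

local notation "cl" => @Quotient.mk _ (Equiv.Perm.SameCycle.setoid σ)

instance : DecidableRel (Equiv.Perm.SameCycle.setoid σ).r :=
  fun a b => inferInstanceAs (Decidable (σ.SameCycle a b))


instance : DecidableEq (Quotient (Equiv.Perm.SameCycle.setoid σ)) :=
  @Quotient.decidableEq _ _ (fun a b => inferInstanceAs (Decidable (σ.SameCycle a b)))

instance : Fintype (Quotient (Equiv.Perm.SameCycle.setoid σ)) :=
  @Quotient.fintype _ _ _ (fun a b => inferInstanceAs (Decidable (σ.SameCycle a b)))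

lemma sameCycle_out_mk (x : Fin k) :
    σ.SameCycle (Quotient.out (cl x)) x :=
  Quotient.exact (Quotient.out_eq (cl x))

lemma cl_eq_cl_iff {a b : Fin k} :
    cl a = cl b ↔ σ.SameCycle a b := by
  constructor
  · intro h; exact Quotient.exact h
  · intro h; exact Quotient.sound h

lemma mem_support_congr {a b : Fin k} (h : σ.SameCycle a b) :
    a ∈ σ.support ↔ b ∈ σ.support := by
  simp only [Equiv.Perm.mem_support]
  exact not_congr h.apply_eq_self_iff

/-- key lemma 0: multiset of class sizes equals `fullCycleType`. -/
lemma classSizes_eq :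
    Multiset.map (fun q => (univ.filter fun i => cl i = q).card)
        (univ : Finset (Quotient (Equiv.Perm.SameCycle.setoid σ))).val
      = fullCycleType σ := by
  classical
  set Q := Quotient (Equiv.Perm.SameCycle.setoid σ)
  set n : Q → ℕ := fun q => (univ.filter fun i => cl i = q).card with hn
  set P : Q → Prop := fun q => q.out ∈ σ.support with hP
  -- split
  have hsplit : (univ : Finset Q).val =
      (univ.filter P).val + (univ.filter fun q => ¬ P q).val := by
    simp only [Finset.filter_val]
    exact (Multiset.filter_add_not P _).symm
  rw [hsplit, Multiset.map_add]
  have hclass_support : ∀ q : Q, P q →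
      (univ.filter fun i => cl i = q) = (σ.cycleOf q.out).support := by
    intro q hq
    ext i
    simp only [Finset.mem_filter, Finset.mem_univ, true_and,
      Equiv.Perm.mem_support_cycleOf_iff]
    constructor
    · intro h
      refine ⟨?_, hq⟩
      have : cl i = cl q.out := by rw [h, Quotient.out_eq]
      exact ((cl_eq_cl_iff σ).mp this).symm
    · rintro ⟨h, -⟩
      rw [← Quotient.out_eq q]
      exact (cl_eq_cl_iff σ).mpr h.symm
  have hclass_fixed : ∀ x : Fin k, x ∉ σ.support →
      (univ.filter fun i => cl i = cl x) = {x} := by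
    intro x hx
    ext i
    simp only [Finset.mem_filter, Finset.mem_univ, true_and, Finset.mem_singleton,
      cl_eq_cl_iff σ]
    constructor
    · intro h
      exact h.eq_of_right (show σ x = x by simpa [Equiv.Perm.mem_support] using hx)
    · rintro rfl; exact Equiv.Perm.SameCycle.refl σ i
  -- part A : support classes give cycleType
  have hA : Multiset.map n (univ.filter P).val = σ.cycleType := by
    have himg : (univ.filter P).image (fun q : Q => σ.cycleOf q.out)
        = σ.cycleFactorsFinset := by
      ext c
      simp only [Finset.mem_image, Finset.mem_filter, Finset.mem_univ, true_and]
      constructor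
      · rintro ⟨q, hq, rfl⟩
        exact Equiv.Perm.cycleOf_mem_cycleFactorsFinset_iff.mpr hq
      · intro hc
        obtain ⟨x, hx⟩ := (Equiv.Perm.mem_cycleFactorsFinset_iff.mp hc).1.nonempty_support
        have hxs : x ∈ σ.support := by
          have h2 := (Equiv.Perm.mem_cycleFactorsFinset_iff.mp hc).2 x hx
          simp only [Equiv.Perm.mem_support] at hx ⊢
          rw [← h2]; exact hx
        refine ⟨cl x, ?_, ?_⟩
        · change (cl x).out ∈ σ.support
          rw [mem_support_congr σ (sameCycle_out_mk σ x)]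
          exact hxs
        · have h1 : σ.SameCycle (cl x).out x := sameCycle_out_mk σ x
          rw [h1.cycleOf_eq, ← Equiv.Perm.cycle_is_cycleOf hx hc]
    have hinj : Set.InjOn (fun q : Q => σ.cycleOf q.out) (univ.filter P) := by
      intro q hq q' hq' h
      simp only [Finset.coe_filter, Set.mem_setOf_eq, Finset.mem_univ, true_and] at hq hq'
      have h1 : q.out ∈ (σ.cycleOf q.out).support :=
        Equiv.Perm.mem_support_cycleOf_iff.mpr ⟨Equiv.Perm.SameCycle.refl σ _, hq⟩
      replace h : σ.cycleOf q.out = σ.cycleOf q'.out := h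
      rw [h] at h1
      have h2 : σ.SameCycle q'.out q.out :=
        (Equiv.Perm.mem_support_cycleOf_iff.mp h1).1
      have h3 : cl q.out = cl q'.out := (cl_eq_cl_iff σ).mpr h2.symm
      rw [Quotient.out_eq, Quotient.out_eq] at h3
      exact h3
    rw [Equiv.Perm.cycleType_def, ← himg, Finset.image_val_of_injOn hinj,
      Multiset.map_map, Multiset.map_congr rfl]
    intro q hq
    simp only [Finset.mem_val, Finset.mem_filter, Finset.mem_univ, true_and] at hq
    simp only [Function.comp_apply, hn]
    rw [hclass_support q hq]
  -- part B : fixed points give replicate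
  have hB : Multiset.map n (univ.filter fun q => ¬ P q).val
      = Multiset.replicate (k - σ.support.card) 1 := by
    apply Multiset.eq_replicate.mpr
    constructor
    · rw [Multiset.card_map]
      have hcard : (σ.supportᶜ : Finset (Fin k)).card = (univ.filter fun q => ¬ P q).card := by
        apply Finset.card_nbij (fun x => cl x)
        · intro x hx
          simp only [Finset.coe_filter, Set.mem_setOf_eq, Finset.mem_filter, Finset.mem_univ, true_and]
          intro hPx
          simp only [Finset.coe_compl, Set.mem_compl_iff, Finset.mem_coe, Finset.mem_compl] at hx
          exact hx ((mem_support_congr σ (sameCycle_out_mk σ x)).mp hPx)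
        · intro a ha b hb h
          simp only [Finset.coe_compl, Set.mem_compl_iff, Finset.mem_coe] at ha hb
          have := (cl_eq_cl_iff σ).mp h
          exact this.eq_of_left (show σ a = a by simpa [Equiv.Perm.mem_support] using ha)
        · intro q hq
          simp only [Finset.coe_filter, Set.mem_setOf_eq, Finset.mem_univ, true_and] at hq
          refine ⟨q.out, ?_, Quotient.out_eq q⟩
          simp only [Finset.coe_compl, Set.mem_compl_iff, Finset.mem_coe]
          exact hq
      show (univ.filter fun q => ¬ P q).card = _
      rw [← hcard, Finset.card_compl, Fintype.card_fin]
    · intro b hb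
      obtain ⟨q, hq, rfl⟩ := Multiset.mem_map.mp hb
      simp only [Finset.mem_val, Finset.mem_filter, Finset.mem_univ, true_and] at hq
      have : (univ.filter fun i => cl i = q) = {q.out} := by
        have := hclass_fixed q.out hq
        rwa [Quotient.out_eq q] at this
      simp [hn, this]
  rw [hA, hB, fullCycleType]

end Classes

section Invariant

variable {k : ℕ} {D : Type*} [Fintype D] [DecidableEq D]

local notation "cl" σ => @Quotient.mk _ (Equiv.Perm.SameCycle.setoid σ)

lemma invariant_zpow {σ : Equiv.Perm (Fin k)} {x : Fin k → D}
    (h : ∀ i, x (σ i) = x i) : ∀ (n : ℤ) (i : Fin k), x ((σ ^ n) i) = x i := by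
  have hinv : ∀ i, x (σ⁻¹ i) = x i := by
    intro i
    conv_rhs => rw [← (show σ (σ⁻¹ i) = i from Equiv.apply_symm_apply σ i)]
    rw [h]
  intro n
  induction n using Int.induction_on with
  | zero => simp
  | succ n ih =>
    intro i
    rw [zpow_add_one, Equiv.Perm.mul_apply, ih, h]
  | pred n ih =>
    intro i
    rw [zpow_sub_one, Equiv.Perm.mul_apply, ih, hinv]

lemma invariant_congr {σ : Equiv.Perm (Fin k)} {x : Fin k → D}
    (h : ∀ i, x (σ i) = x i) {a b : Fin k} (hab : σ.SameCycle a b) : x a = x b := by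
  obtain ⟨m, hm⟩ := hab
  rw [← hm, invariant_zpow h]

lemma sum_invariant (σ : Equiv.Perm (Fin k)) (f : D → ℂ) :
    ∑ x ∈ univ.filter (fun x : Fin k → D => ∀ i, x (σ i) = x i), ∏ i, f (x i)
      = ((fullCycleType σ).map (fun m => ∑ y : D, f y ^ m)).prod := by
  rw [← classSizes_eq σ, Multiset.map_map, ← Finset.prod_eq_multiset_prod]
  simp only [Function.comp_apply]
  rw [Finset.prod_univ_sum, Fintype.piFinset_univ]
  refine Finset.sum_nbij' (fun x => fun q => x q.out) (fun g => fun i => g ((cl σ) i))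
    ?_ ?_ ?_ ?_ ?_
  · intro x hx
    exact Finset.mem_univ _
  · intro g hg
    simp only [Finset.mem_filter, Finset.mem_univ, true_and]
    intro i
    have : ((cl σ) (σ i)) = (cl σ) i :=
      Quotient.sound (Equiv.Perm.sameCycle_apply_left.mpr (Equiv.Perm.SameCycle.refl σ i))
    rw [this]
  · intro x hx
    simp only [Finset.mem_filter, Finset.mem_univ, true_and] at hx
    funext i
    exact invariant_congr hx (sameCycle_out_mk σ i)
  · intro g hg
    funext q
    show g ⟦q.out⟧ = g q
    rw [Quotient.out_eq]
  · intro x hx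
    simp only [Finset.mem_filter, Finset.mem_univ, true_and] at hx
    rw [← Finset.prod_fiberwise univ (fun i => (cl σ) i) (fun i => f (x i))]
    refine Finset.prod_congr rfl fun q _ => ?_
    rw [Finset.prod_congr rfl (g := fun _ => f (x q.out)) ?_, Finset.prod_const]
    intro i hi
    simp only [Finset.mem_filter, Finset.mem_univ, true_and] at hi
    congr 1
    exact invariant_congr hx (by rw [← cl_eq_cl_iff σ, hi, Quotient.out_eq])

end Invariant

section SignPart

variable {k : ℕ} {D : Type*} [Fintype D] [DecidableEq D]

omit [Fintype D] [DecidableEq D] in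
lemma card_cycleType_le (σ : Equiv.Perm (Fin k)) :
    Multiset.card σ.cycleType ≤ σ.support.card := by
  rw [← Equiv.Perm.sum_cycleType]
  have := Multiset.card_nsmul_le_sum (s := σ.cycleType) (a := 1)
    (fun x hx => le_trans (by norm_num) (Equiv.Perm.two_le_of_mem_cycleType hx))
  simpa using this

omit [Fintype D] [DecidableEq D] in
lemma sign_eq_pow (σ : Equiv.Perm (Fin k)) :
    ((Equiv.Perm.sign σ : ℤ) : ℂ) = (-1 : ℂ) ^ (k - Multiset.card (fullCycleType σ)) := by
  have hs : σ.support.card ≤ k := by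
    simpa using Finset.card_le_univ σ.support
  have hc := card_cycleType_le σ
  have hcard : k - Multiset.card (fullCycleType σ)
      = σ.support.card - Multiset.card σ.cycleType := by
    rw [fullCycleType, Multiset.card_add, Multiset.card_replicate]
    omega
  rw [hcard, Equiv.Perm.sign_of_cycleType]
  have hpow : ∀ n : ℕ, (((((-1 : ℤˣ)) ^ n : ℤˣ) : ℤ) : ℂ) = (-1 : ℂ) ^ n := by
    intro n
    push_cast
    norm_num
  rw [hpow, Equiv.Perm.sum_cycleType]
  have h2 : σ.support.card + Multiset.card σ.cycleType
      = (σ.support.card - Multiset.card σ.cycleType) + 2 * Multiset.card σ.cycleType := by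
    omega
  rw [h2, pow_add, pow_mul]
  norm_num

lemma sum_sign_stab (x : Fin k → D) :
    ∑ σ ∈ univ.filter (fun σ : Equiv.Perm (Fin k) => ∀ i, x (σ i) = x i),
      ((Equiv.Perm.sign σ : ℤ) : ℂ) = if Function.Injective x then 1 else 0 := by
  by_cases hinj : Function.Injective x
  · rw [if_pos hinj]
    have hfilt : univ.filter (fun σ : Equiv.Perm (Fin k) => ∀ i, x (σ i) = x i) = {1} := by
      ext σ
      simp only [Finset.mem_filter, Finset.mem_univ, true_and, Finset.mem_singleton]
      constructor
      · intro h
        exact Equiv.ext fun i => (hinj (h i)).trans (Equiv.Perm.one_apply i).symm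
      · rintro rfl
        simp
    rw [hfilt]
    simp
  · rw [if_neg hinj]
    rw [Function.not_injective_iff] at hinj
    obtain ⟨a, b, hab, hne⟩ := hinj
    apply Finset.sum_involution (fun σ _ => Equiv.swap a b * σ)
    · intro σ hσ
      have hsgn : Equiv.Perm.sign (Equiv.swap a b * σ) = - Equiv.Perm.sign σ := by
        rw [Equiv.Perm.sign_mul, Equiv.Perm.sign_swap hne, neg_one_mul]
      rw [hsgn]
      push_cast
      ring
    · intro σ _ _ hcontr
      have : Equiv.swap a b = 1 :=
        mul_right_cancel (hcontr.trans (one_mul σ).symm)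
      exact hne (Equiv.swap_eq_one_iff.mp this)
    · intro σ hσ
      simp only [Finset.mem_filter, Finset.mem_univ, true_and] at hσ ⊢
      intro i
      rw [Equiv.Perm.mul_apply]
      have hswap : ∀ j, x (Equiv.swap a b j) = x j := by
        intro j
        rcases eq_or_ne j a with rfl | hja
        · rw [Equiv.swap_apply_left]; exact hab.symm
        rcases eq_or_ne j b with rfl | hjb
        · rw [Equiv.swap_apply_right]; exact hab
        · rw [Equiv.swap_apply_of_ne_of_ne hja hjb]
      rw [hswap, hσ]
    · intro σ _
      rw [← mul_assoc, Equiv.swap_mul_self, one_mul]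

end SignPart


/-- The partition of `k` attached to a permutation of `Fin k`. -/
def permPartition {k : ℕ} (σ : Equiv.Perm (Fin k)) : Nat.Partition k where
  parts := fullCycleType σ
  parts_pos := by
    intro i hi
    rw [fullCycleType, Multiset.mem_add] at hi
    rcases hi with hi | hi
    · exact lt_of_lt_of_le (by norm_num) (Equiv.Perm.two_le_of_mem_cycleType hi)
    · rw [Multiset.eq_of_mem_replicate hi]
      norm_num
  parts_sum := by
    have hs : σ.support.card ≤ k := by simpa using Finset.card_le_univ σ.support
    rw [fullCycleType, Multiset.sum_add, Multiset.sum_replicate, Equiv.Perm.sum_cycleType,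
      smul_eq_mul, mul_one]
    omega

lemma permPartition_parts {k : ℕ} (σ : Equiv.Perm (Fin k)) :
    (permPartition σ).parts = fullCycleType σ := rfl

/-- `N(c_1, …, c_k)`: the number of permutations in `S_k` whose cycle type is the
partition `P`. -/
noncomputable def permCountOfType {k : ℕ} (P : Nat.Partition k) : ℕ :=
  Nat.card {σ : Equiv.Perm (Fin k) // fullCycleType σ = P.parts}

/-- Power-sum expansion of the distinct-coordinates sum: for `f : D → ℂ`,
`∑_{x ∈ D^k, coords distinct} f(x_1)⋯f(x_k) = ∑_{∑ i·c_i = k} (-1)^{k - ∑ c_i}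
N(c_1, …, c_k) ∏_i (∑_{x ∈ D} f(x)^i)^{c_i}`. -/
theorem distinct_tuple_power_sum_expansion {D : Type*} [Fintype D] [DecidableEq D]
    (k : ℕ) (hk : 1 ≤ k) (f : D → ℂ) :
    ∑ x ∈ (Finset.univ.filter (fun x : Fin k → D => Function.Injective x)),
        ∏ i, f (x i) =
      ∑ P : Nat.Partition k,
        (-1 : ℂ) ^ (k - Multiset.card P.parts) * (permCountOfType P : ℂ) *
          (P.parts.map (fun p => ∑ y : D, f y ^ p)).prod := by
  haveI : DecidableEq (Nat.Partition k) :=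
    fun a b => decidable_of_iff (a.parts = b.parts) (Nat.Partition.ext_iff).symm
  have hiff : ∀ (P : Nat.Partition k) (σ : Equiv.Perm (Fin k)),
      fullCycleType σ = P.parts ↔ permPartition σ = P := by
    intro P σ
    rw [← permPartition_parts, ← Nat.Partition.ext_iff]
  have hcount : ∀ P : Nat.Partition k,
      permCountOfType P
        = (univ.filter (fun σ : Equiv.Perm (Fin k) => permPartition σ = P)).card := by
    intro P
    rw [permCountOfType, Nat.card_eq_fintype_card, Fintype.card_subtype]
    congr 1
    exact Finset.filter_congr fun σ _ => hiff P σ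
  symm
  calc
    ∑ P : Nat.Partition k,
        (-1 : ℂ) ^ (k - Multiset.card P.parts) * (permCountOfType P : ℂ) *
          (P.parts.map (fun p => ∑ y : D, f y ^ p)).prod
      = ∑ P : Nat.Partition k,
          ∑ σ ∈ univ.filter (fun σ : Equiv.Perm (Fin k) => permPartition σ = P),
            (-1 : ℂ) ^ (k - Multiset.card (fullCycleType σ)) *
              ((fullCycleType σ).map (fun p => ∑ y : D, f y ^ p)).prod := by
        refine Finset.sum_congr rfl fun P _ => ?_
        rw [Finset.sum_congr rfl (g := fun _ =>
            (-1 : ℂ) ^ (k - Multiset.card P.parts) *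
              (P.parts.map (fun p => ∑ y : D, f y ^ p)).prod) ?_]
        · rw [Finset.sum_const, hcount P, nsmul_eq_mul]
          ring
        · intro σ hσ
          simp only [Finset.mem_filter, Finset.mem_univ, true_and] at hσ
          rw [← hσ, permPartition_parts]
    _ = ∑ σ : Equiv.Perm (Fin k),
          (-1 : ℂ) ^ (k - Multiset.card (fullCycleType σ)) *
            ((fullCycleType σ).map (fun p => ∑ y : D, f y ^ p)).prod :=
        Finset.sum_fiberwise univ (fun σ => permPartition σ) _
    _ = ∑ σ : Equiv.Perm (Fin k),
          ((Equiv.Perm.sign σ : ℤ) : ℂ) *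
            ∑ x ∈ univ.filter (fun x : Fin k → D => ∀ i, x (σ i) = x i),
              ∏ i, f (x i) := by
        refine Finset.sum_congr rfl fun σ _ => ?_
        rw [sign_eq_pow, sum_invariant]
    _ = ∑ σ : Equiv.Perm (Fin k),
          ∑ x ∈ univ.filter (fun x : Fin k → D => ∀ i, x (σ i) = x i),
            ((Equiv.Perm.sign σ : ℤ) : ℂ) * ∏ i, f (x i) := by
        refine Finset.sum_congr rfl fun σ _ => ?_
        rw [Finset.mul_sum]
    _ = ∑ x : Fin k → D,
          ∑ σ ∈ univ.filter (fun σ : Equiv.Perm (Fin k) => ∀ i, x (σ i) = x i),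
            ((Equiv.Perm.sign σ : ℤ) : ℂ) * ∏ i, f (x i) := by
        refine Finset.sum_comm' ?_
        intro σ x
        simp only [Finset.mem_filter, Finset.mem_univ, true_and, and_comm]
    _ = ∑ x : Fin k → D, (if Function.Injective x then (1 : ℂ) else 0) * ∏ i, f (x i) := by
        refine Finset.sum_congr rfl fun x _ => ?_
        rw [← Finset.sum_mul, sum_sign_stab]
    _ = ∑ x ∈ (Finset.univ.filter (fun x : Fin k → D => Function.Injective x)),
          ∏ i, f (x i) := by
        rw [Finset.sum_filter]
        refine Finset.sum_congr rfl fun x _ => ?_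
        by_cases hx : Function.Injective x <;> simp [hx]
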